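/- Let 0 < p0 < p1 < 1 with p0 + p1 = 1, let 0 < α < 1/2, set β = α, u = ln((1−β)/α), l = ln(β/(1−α)), and assume ln((1−α)/α) > ln(p1/p0). Then there exist adjacent sequences x, x' : ℕ → {0,1} such that the SPRT stopping step τ(x) = min{ n ≥ 1 : Λ_n(x) ∉ (l, u) } is finite while τ(x') is infinite (Λ_n(x') ∈ (l, u) for all n ≥ 1). -/

import Mathlib

/-- The SPRT log-likelihood ratio after `n` samples of the data stream `x`
(coordinates indexed from 1), for Bernoulli parameters `p0 < p1`. -/
noncomputable def sprtLLR (p0 p1 : ℝ) (x : ℕ → ℝ) (n : ℕ) : ℝ :=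
  ∑ i ∈ Finset.Icc 1 n,
    Real.log ((p1 ^ (x i) * (1 - p1) ^ (1 - x i)) / (p0 ^ (x i) * (1 - p0) ^ (1 - x i)))

/-- For `p0 + p1 = 1`, `β = α < 1/2`, `u = ln ((1 − β)/α)`, `l = ln (β/(1 − α))` and
`ln ((1 − α)/α) > ln (p1/p0)`, there exist adjacent `{0,1}`-valued data streams `x, x'`
such that the SPRT stopping step is finite on `x` (some `n ≥ 1` has `Λ_n(x) ∉ (l, u)`)
but infinite on `x'` (`Λ_n(x') ∈ (l, u)` for all `n ≥ 1`). -/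
theorem sprt_stopping_unbounded_sensitivity (p0 p1 α : ℝ)
    (hp0 : 0 < p0) (hp01 : p0 < p1) (hp1 : p1 < 1) (hsum : p0 + p1 = 1)
    (hα0 : 0 < α) (hα1 : α < 1 / 2)
    (hbig : Real.log ((1 - α) / α) > Real.log (p1 / p0)) :
    ∃ x x' : ℕ → ℝ,
      (∀ i, x i = 0 ∨ x i = 1) ∧ (∀ i, x' i = 0 ∨ x' i = 1) ∧
      (∃ K : ℕ, ∀ n, n ≠ K → x n = x' n) ∧
      (∃ n, 1 ≤ n ∧
        sprtLLR p0 p1 x n ∉ Set.Ioo (Real.log (α / (1 - α))) (Real.log ((1 - α) / α))) ∧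
      (∀ n, 1 ≤ n →
        sprtLLR p0 p1 x' n ∈ Set.Ioo (Real.log (α / (1 - α))) (Real.log ((1 - α) / α))) := by
  set c := Real.log (p1 / p0) with hc
  set u := Real.log ((1 - α) / α) with hu
  set l := Real.log (α / (1 - α)) with hl
  have hp1p0 : 1 < p1 / p0 := (one_lt_div hp0).mpr hp01
  have hcpos : 0 < c := Real.log_pos hp1p0
  have hαlt : α < 1 - α := by linarith
  have hlneg : l < 0 := Real.log_neg (div_pos hα0 (by linarith)) ((div_lt_one (by linarith)).mpr hαlt)
  have hcu : c < u := hbig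
  have hdiv : 1 < u / c := (one_lt_div hcpos).mpr hcu
  set m : ℕ := ⌈u / c⌉₊ - 1 with hm
  have hceil2 : 2 ≤ ⌈u / c⌉₊ := by
    have h1 : (1 : ℕ) < ⌈u / c⌉₊ := Nat.lt_ceil.mpr (by exact_mod_cast hdiv)
    omega
  have hm1 : 1 ≤ m := by omega
  have hmceil : (m : ℝ) + 1 = (⌈u / c⌉₊ : ℝ) := by
    have : m + 1 = ⌈u / c⌉₊ := by omega
    exact_mod_cast congrArg (Nat.cast : ℕ → ℝ) this
  have hmc_lt : (m : ℝ) * c < u := by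
    have h1 : (⌈u / c⌉₊ : ℝ) < u / c + 1 :=
      Nat.ceil_lt_add_one (le_of_lt (lt_trans one_pos hdiv))
    have h2 : (m : ℝ) < u / c := by linarith
    calc (m : ℝ) * c < (u / c) * c := by nlinarith
      _ = u := div_mul_cancel₀ u hcpos.ne'
  have hu_le : u ≤ ((m : ℝ) + 1) * c := by
    have h1 : u / c ≤ (⌈u / c⌉₊ : ℝ) := Nat.le_ceil _
    have h2 : u / c ≤ (m : ℝ) + 1 := by linarith
    calc u = (u / c) * c := (div_mul_cancel₀ u hcpos.ne').symm
      _ ≤ ((m : ℝ) + 1) * c := by nlinarith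
  -- per-term values
  have hterm1 : ∀ (y : ℕ → ℝ) (i : ℕ), y i = 1 →
      Real.log ((p1 ^ (y i) * (1 - p1) ^ (1 - y i)) / (p0 ^ (y i) * (1 - p0) ^ (1 - y i))) = c := by
    intro y i h
    rw [h]
    norm_num [Real.rpow_one, Real.rpow_zero, hc]
  have hterm0 : ∀ (y : ℕ → ℝ) (i : ℕ), y i = 0 →
      Real.log ((p1 ^ (y i) * (1 - p1) ^ (1 - y i)) / (p0 ^ (y i) * (1 - p0) ^ (1 - y i))) = -c := by
    intro y i h
    rw [h]
    have h1 : (1 : ℝ) - p1 = p0 := by linarith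
    have h2 : (1 : ℝ) - p0 = p1 := by linarith
    rw [h1, h2]
    norm_num [Real.rpow_one, Real.rpow_zero, hc]
    rw [show p0 / p1 = (p1 / p0)⁻¹ from (inv_div p1 p0).symm, Real.log_inv]
  -- sequences
  set x' : ℕ → ℝ := fun i => if i ≤ m then 1 else if (i - m) % 2 = 1 then 0 else 1 with hx'
  set x : ℕ → ℝ := fun i => if i = m + 1 then 1 else x' i with hx
  have hx'val : ∀ i, x' i = 0 ∨ x' i = 1 := by
    intro i; simp only [hx']; split_ifs <;> simp
  have hxval : ∀ i, x i = 0 ∨ x i = 1 := by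
    intro i; simp only [hx]; split_ifs with h; exact Or.inr rfl; exact hx'val i
  -- sums of all-ones prefixes
  have hsumones : ∀ (y : ℕ → ℝ) (n : ℕ), (∀ i, 1 ≤ i → i ≤ n → y i = 1) →
      sprtLLR p0 p1 y n = (n : ℝ) * c := by
    intro y n h
    unfold sprtLLR
    rw [Finset.sum_congr rfl (fun i hi => hterm1 y i
      (h i (Finset.mem_Icc.mp hi).1 (Finset.mem_Icc.mp hi).2))]
    simp [Nat.card_Icc, mul_comm]
  -- recurrence
  have hrec : ∀ (y : ℕ → ℝ) (n : ℕ), sprtLLR p0 p1 y (n + 1) = sprtLLR p0 p1 y n +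
      Real.log ((p1 ^ (y (n+1)) * (1 - p1) ^ (1 - y (n+1))) /
        (p0 ^ (y (n+1)) * (1 - p0) ^ (1 - y (n+1)))) := by
    intro y n
    unfold sprtLLR
    rw [Finset.sum_Icc_succ_top (M := ℝ) (Nat.succ_le_succ (Nat.zero_le n))]
  -- value of Λ for x'
  have hx'base : sprtLLR p0 p1 x' m = (m : ℝ) * c := by
    apply hsumones
    intro i h1 h2
    simp only [hx']
    rw [if_pos h2]
  have hx'val2 : ∀ k, sprtLLR p0 p1 x' (m + k) =
      (m : ℝ) * c + (if k % 2 = 1 then -c else 0) := by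
    intro k
    induction k with
    | zero => simpa using hx'base
    | succ k ih =>
      rw [show m + (k + 1) = (m + k) + 1 from rfl, hrec, ih]
      have hgm : ¬ (m + k + 1 ≤ m) := by omega
      have hsub : (m + k + 1) - m = k + 1 := by omega
      rcases Nat.even_or_odd k with hk | hk
      · have hk0 : k % 2 = 0 := Nat.even_iff.mp hk
        have hk1 : (k + 1) % 2 = 1 := by omega
        have hx'eq : x' (m + k + 1) = 0 := by
          simp only [hx']; rw [if_neg hgm, hsub, if_pos hk1]
        rw [hterm0 x' _ hx'eq]
        simp [hk0, hk1]
      · have hk0 : k % 2 = 1 := Nat.odd_iff.mp hk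
        have hk1 : (k + 1) % 2 ≠ 1 := by omega
        have hx'eq : x' (m + k + 1) = 1 := by
          simp only [hx']; rw [if_neg hgm, hsub, if_neg hk1]
        rw [hterm1 x' _ hx'eq]
        simp [hk0, hk1]
  have hmR : (1 : ℝ) ≤ (m : ℝ) := by exact_mod_cast hm1
  refine ⟨x, x', hxval, hx'val, ⟨m + 1, ?_⟩, ⟨m + 1, Nat.succ_le_succ (Nat.zero_le m), ?_⟩, ?_⟩
  · intro n hn
    simp only [hx]
    rw [if_neg hn]
  · -- Λ_{m+1}(x) = (m+1) c ≥ u, so not in the open interval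
    have hval : sprtLLR p0 p1 x (m + 1) = ((m : ℝ) + 1) * c := by
      have := hsumones x (m + 1) (by
        intro i h1 h2
        simp only [hx, hx']
        rcases Nat.lt_or_ge i (m + 1) with h | h
        · rw [if_neg (by omega), if_pos (by omega)]
        · rw [if_pos (by omega)])
      rw [this]; push_cast; ring
    rw [hval]
    intro hmem
    exact absurd hmem.2 (not_lt.mpr hu_le)
  · intro n hn
    rcases Nat.lt_or_ge m n with h | h
    · -- n > m, write n = m + k
      obtain ⟨k, rfl⟩ := Nat.exists_eq_add_of_le (Nat.le_of_lt h)
      rw [hx'val2 k]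
      have hmcge : c ≤ (m : ℝ) * c := le_mul_of_one_le_left hcpos.le hmR
      split_ifs with hk
      · exact ⟨by linarith, by linarith⟩
      · exact ⟨by linarith, by linarith⟩
    · -- n ≤ m
      have hval : sprtLLR p0 p1 x' n = (n : ℝ) * c := by
        apply hsumones
        intro i h1 h2
        simp only [hx']
        rw [if_pos (by omega)]
      rw [hval]
      have hnR : (1 : ℝ) ≤ (n : ℝ) := by exact_mod_cast hn
      have hnm : (n : ℝ) ≤ (m : ℝ) := by exact_mod_cast h
      have h1 : (n : ℝ) * c ≤ (m : ℝ) * c := mul_le_mul_of_nonneg_right hnm hcpos.le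
      have h2 : 0 < (n : ℝ) * c := mul_pos (by linarith) hcpos
      exact ⟨by linarith, by linarith⟩
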